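/- Theorem 1 (composition orthogonality in the sense of Laguerre): let ν ≥ 0, α > −1, and let (P_n)_{n∈ℕ₀} be a sequence of real polynomials with deg P_n = n. Then the Prudnikov orthogonality ∫₀^∞ P_n(x) P_m(x) x^α ρ_ν(x) dx = δ_{n,m} holds for all n, m ∈ ℕ₀ if and only if the composition orthogonality ∫₀^∞ t^ν e^{-t} · ((P_m · P_n)(θ){t^α})(t) dt = δ_{n,m} / Γ(1+α) holds for all n, m ∈ ℕ₀. -/

import Mathlib

open MeasureTheory Real Set

/-- The scaled Macdonald function `ρ_ν(x) = ∫₀^∞ t^(ν-1) e^(-t - x/t) dt`. -/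
noncomputable def rho (ν : ℝ) (x : ℝ) : ℝ :=
  ∫ t in Ioi (0:ℝ), t ^ (ν - 1) * Real.exp (-t - x / t)

/-- For a polynomial `p(x) = Σ_j a_j x^j`, the function `p(θ){t^α} = Σ_j a_j (1+α)_j t^{α+j}`,
where `(1+α)_j = Γ(1+α+j)/Γ(1+α)` is the Pochhammer symbol. -/
noncomputable def polyThetaApply (p : Polynomial ℝ) (α : ℝ) (t : ℝ) : ℝ :=
  ∑ j ∈ Finset.range (p.natDegree + 1),
    p.coeff j * (Real.Gamma (1 + α + j) / Real.Gamma (1 + α)) * t ^ (α + (j : ℝ))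

open scoped ENNReal

lemma gamma_val {s : ℝ} (hs : 0 < s) :
    ∫ t in Ioi (0:ℝ), t ^ (s-1) * Real.exp (-t) = Real.Gamma s := by
  rw [Real.Gamma_eq_integral hs]
  exact setIntegral_congr_fun measurableSet_Ioi fun t _ => mul_comm _ _

lemma gamma_integrable {s : ℝ} (hs : 0 < s) :
    IntegrableOn (fun t : ℝ => t ^ (s-1) * Real.exp (-t)) (Ioi 0) :=
  (Real.GammaIntegral_convergent hs).congr_fun (fun t _ => mul_comm _ _) measurableSet_Ioi

lemma inner_val {β t : ℝ} (hβ : -1 < β) (ht : 0 < t) :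
    ∫ x in Ioi (0:ℝ), x ^ β * Real.exp (-(x/t)) = t ^ (β+1) * Real.Gamma (β+1) := by
  have h := integral_rpow_mul_exp_neg_mul_rpow (p := 1) (q := β) (b := t⁻¹)
    one_pos hβ (by positivity)
  simp only [rpow_one, div_one] at h
  rw [show (∫ x in Ioi (0:ℝ), x ^ β * Real.exp (-(x/t)))
      = ∫ x in Ioi (0:ℝ), x ^ β * Real.exp (-t⁻¹ * x) by
    refine setIntegral_congr_fun measurableSet_Ioi fun x hx => ?_
    rw [div_eq_inv_mul, neg_mul], h]
  rw [inv_rpow ht.le, ← rpow_neg ht.le, neg_neg, mul_one]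

lemma inner_integrable {β t : ℝ} (hβ : -1 < β) (ht : 0 < t) :
    IntegrableOn (fun x : ℝ => x ^ β * Real.exp (-(x/t))) (Ioi 0) := by
  have h := integrableOn_rpow_mul_exp_neg_mul_rpow (p := 1) (s := β) (b := t⁻¹)
    hβ one_pos (by positivity)
  simp only [rpow_one] at h
  refine h.congr_fun (fun x hx => ?_) measurableSet_Ioi
  simp only [div_eq_inv_mul, neg_mul]

lemma rho_integrable {ν x : ℝ} (hν : 0 ≤ ν) (hx : 0 < x) :
    IntegrableOn (fun t : ℝ => t ^ (ν - 1) * Real.exp (-t - x / t)) (Ioi 0) := by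
  have hg : IntegrableOn (fun t : ℝ => x⁻¹ * (t ^ ((ν+1)-1) * Real.exp (-t))) (Ioi 0) :=
    (gamma_integrable (by linarith)).const_mul _
  refine hg.mono' ?_ ?_
  · apply Measurable.aestronglyMeasurable
    exact (measurable_id.pow measurable_const).mul
      ((measurable_id.neg.sub (measurable_const.div measurable_id)).exp)
  · filter_upwards [ae_restrict_mem measurableSet_Ioi] with t ht
    have ht0 : (0:ℝ) < t := ht
    have hexp : Real.exp (-(x/t)) ≤ t / x := by
      rw [Real.exp_neg, inv_le_comm₀ (Real.exp_pos _) (by positivity)]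
      calc (t/x)⁻¹ = x/t := by rw [inv_div]
        _ ≤ Real.exp (x/t) := by
          have := Real.add_one_le_exp (x/t); linarith
    have h1 : t ^ (ν-1) * Real.exp (-t - x/t) ≤ x⁻¹ * (t ^ ((ν+1)-1) * Real.exp (-t)) := by
      rw [show -t - x/t = -t + -(x/t) by ring, Real.exp_add]
      calc t ^ (ν-1) * (Real.exp (-t) * Real.exp (-(x/t)))
          ≤ t ^ (ν-1) * (Real.exp (-t) * (t/x)) := by
            apply mul_le_mul_of_nonneg_left (mul_le_mul_of_nonneg_left hexp (Real.exp_pos _).le)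
              (rpow_nonneg ht0.le _)
        _ = x⁻¹ * (t ^ ((ν+1)-1) * Real.exp (-t)) := by
            rw [show (ν+1)-1 = (ν-1)+1 by ring, rpow_add ht0, rpow_one]
            field_simp
    rw [Real.norm_eq_abs, abs_of_nonneg (mul_nonneg (rpow_nonneg ht0.le _) (Real.exp_pos _).le)]
    exact h1

lemma rho_nonneg {ν x : ℝ} (hx : 0 < x) : 0 ≤ rho ν x := by
  apply integral_nonneg_of_ae
  filter_upwards [ae_restrict_mem measurableSet_Ioi] with t ht
  exact mul_nonneg (rpow_nonneg (le_of_lt ht) _) (Real.exp_pos _).le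

lemma rho_measurable (ν : ℝ) : StronglyMeasurable (rho ν) := by
  have h : Measurable fun p : ℝ × ℝ => p.2 ^ (ν-1) * Real.exp (-p.2 - p.1/p.2) :=
    (measurable_snd.pow measurable_const).mul
      ((measurable_snd.neg.sub (measurable_fst.div measurable_snd)).exp)
  exact h.stronglyMeasurable.integral_prod_right'

-- key moment computation via Tonelli
lemma moment_lintegral {ν β : ℝ} (hν : 0 ≤ ν) (hβ : -1 < β) :
    ∫⁻ x in Ioi (0:ℝ), ENNReal.ofReal (x ^ β * rho ν x)
      = ENNReal.ofReal (Real.Gamma (β+1) * Real.Gamma (ν+β+1)) := by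
  set μ := volume.restrict (Ioi (0:ℝ)) with hμ
  have hmeas : Measurable fun p : ℝ × ℝ =>
      ENNReal.ofReal (p.1 ^ β * (p.2 ^ (ν-1) * Real.exp (-p.2 - p.1 / p.2))) := by
    apply ENNReal.measurable_ofReal.comp
    exact (measurable_fst.pow measurable_const).mul
      ((measurable_snd.pow measurable_const).mul
        ((measurable_snd.neg.sub (measurable_fst.div measurable_snd)).exp))
  have step1 : ∫⁻ x in Ioi (0:ℝ), ENNReal.ofReal (x ^ β * rho ν x)
      = ∫⁻ x, ∫⁻ t, ENNReal.ofReal (x ^ β * (t ^ (ν-1) * Real.exp (-t - x / t))) ∂μ ∂μ := by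
    refine setLIntegral_congr_fun measurableSet_Ioi (fun x hx => ?_)
    rw [show ENNReal.ofReal (x ^ β * rho ν x)
        = ENNReal.ofReal (x ^ β) * ENNReal.ofReal (rho ν x) from
      ENNReal.ofReal_mul (rpow_nonneg hx.le _)]
    rw [show ENNReal.ofReal (rho ν x)
        = ∫⁻ t, ENNReal.ofReal (t ^ (ν-1) * Real.exp (-t - x / t)) ∂μ from by
      rw [rho]
      exact ofReal_integral_eq_lintegral_ofReal (rho_integrable hν hx)
        (by filter_upwards [ae_restrict_mem measurableSet_Ioi] with t ht using
          mul_nonneg (rpow_nonneg (le_of_lt ht) _) (Real.exp_pos _).le)]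
    rw [← lintegral_const_mul' _ _ ENNReal.ofReal_ne_top]
    refine lintegral_congr fun t => ?_
    rw [← ENNReal.ofReal_mul (rpow_nonneg hx.le _)]
  have step2 : (∫⁻ x, ∫⁻ t, ENNReal.ofReal (x ^ β * (t ^ (ν-1) * Real.exp (-t - x / t))) ∂μ ∂μ)
      = ∫⁻ t, ∫⁻ x, ENNReal.ofReal (x ^ β * (t ^ (ν-1) * Real.exp (-t - x / t))) ∂μ ∂μ := by
    exact lintegral_lintegral_swap (hmeas.aemeasurable)
  have step3 : (∫⁻ t, ∫⁻ x, ENNReal.ofReal (x ^ β * (t ^ (ν-1) * Real.exp (-t - x / t))) ∂μ ∂μ)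
      = ∫⁻ t in Ioi (0:ℝ),
          ENNReal.ofReal (Real.Gamma (β+1) * (t ^ ((ν+β+1)-1) * Real.exp (-t))) := by
    refine setLIntegral_congr_fun measurableSet_Ioi (fun t ht => ?_)
    have ht0 : (0:ℝ) < t := ht
    have key : ∀ x ∈ Ioi (0:ℝ), x ^ β * (t ^ (ν-1) * Real.exp (-t - x / t))
        = (t ^ (ν-1) * Real.exp (-t)) * (x ^ β * Real.exp (-(x/t))) := by
      intro x hx
      rw [show -t - x/t = -t + -(x/t) by ring, Real.exp_add]; ring
    rw [show (∫⁻ x, ENNReal.ofReal (x ^ β * (t ^ (ν-1) * Real.exp (-t - x / t))) ∂μ)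
        = ∫⁻ x, ENNReal.ofReal (t ^ (ν-1) * Real.exp (-t))
            * ENNReal.ofReal (x ^ β * Real.exp (-(x/t))) ∂μ from by
      refine setLIntegral_congr_fun measurableSet_Ioi
        (fun x hx => ?_)
      rw [key x hx, ENNReal.ofReal_mul (mul_nonneg (rpow_nonneg ht0.le _) (Real.exp_pos _).le)]]
    rw [lintegral_const_mul' _ _ ENNReal.ofReal_ne_top]
    rw [show (∫⁻ x, ENNReal.ofReal (x ^ β * Real.exp (-(x/t))) ∂μ)
        = ENNReal.ofReal (t ^ (β+1) * Real.Gamma (β+1)) from by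
      rw [← inner_val hβ ht0]
      exact (ofReal_integral_eq_lintegral_ofReal (inner_integrable hβ ht0)
        (by filter_upwards [ae_restrict_mem measurableSet_Ioi] with x hx using
          mul_nonneg (rpow_nonneg (le_of_lt hx) _) (Real.exp_pos _).le)).symm]
    rw [← ENNReal.ofReal_mul (mul_nonneg (rpow_nonneg ht0.le _) (Real.exp_pos _).le)]
    rw [show t ^ ((ν+β+1)-1) = t ^ (ν-1) * t ^ (β+1) from by
      rw [← rpow_add ht0]; ring_nf]
    congr 1
    ring
  rw [step1, step2, step3]
  rw [show (∫⁻ t in Ioi (0:ℝ), ENNReal.ofReal (Real.Gamma (β+1) * (t ^ ((ν+β+1)-1) * Real.exp (-t))))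
      = ENNReal.ofReal (Real.Gamma (β+1))
        * ∫⁻ t in Ioi (0:ℝ), ENNReal.ofReal (t ^ ((ν+β+1)-1) * Real.exp (-t)) from by
    rw [← lintegral_const_mul' _ _ ENNReal.ofReal_ne_top]
    exact lintegral_congr fun t =>
      ENNReal.ofReal_mul (Real.Gamma_pos_of_pos (by linarith)).le]
  rw [show (∫⁻ t in Ioi (0:ℝ), ENNReal.ofReal (t ^ ((ν+β+1)-1) * Real.exp (-t)))
      = ENNReal.ofReal (Real.Gamma (ν+β+1)) from by
    rw [← gamma_val (show (0:ℝ) < ν+β+1 by linarith)]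
    exact (ofReal_integral_eq_lintegral_ofReal (gamma_integrable (by linarith))
      (by filter_upwards [ae_restrict_mem measurableSet_Ioi] with t ht using
        mul_nonneg (rpow_nonneg (le_of_lt ht) _) (Real.exp_pos _).le)).symm]
  rw [← ENNReal.ofReal_mul (Real.Gamma_pos_of_pos (by linarith)).le]

lemma moment_integrable {ν β : ℝ} (hν : 0 ≤ ν) (hβ : -1 < β) :
    IntegrableOn (fun x : ℝ => x ^ β * rho ν x) (Ioi 0) := by
  constructor
  · exact ((measurable_id.pow measurable_const).stronglyMeasurable.mul
      (rho_measurable ν)).aestronglyMeasurable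
  · rw [hasFiniteIntegral_iff_ofReal
      (by filter_upwards [ae_restrict_mem measurableSet_Ioi] with x hx using
        mul_nonneg (rpow_nonneg (le_of_lt hx) _) (rho_nonneg hx))]
    rw [moment_lintegral hν hβ]
    exact ENNReal.ofReal_lt_top

lemma moment_val {ν β : ℝ} (hν : 0 ≤ ν) (hβ : -1 < β) :
    ∫ x in Ioi (0:ℝ), x ^ β * rho ν x = Real.Gamma (β+1) * Real.Gamma (ν+β+1) := by
  have hnn : 0 ≤ᵐ[volume.restrict (Ioi (0:ℝ))] fun x => x ^ β * rho ν x := by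
    filter_upwards [ae_restrict_mem measurableSet_Ioi] with x hx using
      mul_nonneg (rpow_nonneg (le_of_lt hx) _) (rho_nonneg hx)
  rw [integral_eq_lintegral_of_nonneg_ae hnn
    ((measurable_id.pow measurable_const).stronglyMeasurable.mul
      (rho_measurable ν)).aestronglyMeasurable]
  rw [moment_lintegral hν hβ, ENNReal.toReal_ofReal
    (mul_nonneg (Real.Gamma_pos_of_pos (by linarith)).le
      (Real.Gamma_pos_of_pos (by linarith)).le)]

lemma L_A {ν α : ℝ} (hν : 0 ≤ ν) (hα : -1 < α) (Q : Polynomial ℝ) :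
    ∫ x in Ioi (0:ℝ), Q.eval x * x ^ α * rho ν x
      = ∑ j ∈ Finset.range (Q.natDegree + 1),
          Q.coeff j * (Real.Gamma (α + j + 1) * Real.Gamma (ν + (α + j) + 1)) := by
  have hstep : ∫ x in Ioi (0:ℝ), Q.eval x * x ^ α * rho ν x
      = ∫ x in Ioi (0:ℝ), ∑ j ∈ Finset.range (Q.natDegree + 1),
          Q.coeff j * (x ^ (α + (j:ℝ)) * rho ν x) := by
    refine setIntegral_congr_fun measurableSet_Ioi fun x hx => ?_
    rw [Polynomial.eval_eq_sum_range, Finset.sum_mul, Finset.sum_mul]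
    refine Finset.sum_congr rfl fun j _ => ?_
    rw [rpow_add hx, rpow_natCast]
    ring
  have hj' : ∀ j : ℕ, (-1:ℝ) < α + j := fun j => by
    have : (0:ℝ) ≤ j := Nat.cast_nonneg j
    linarith
  rw [hstep, integral_finset_sum _ (fun j _ => (moment_integrable hν (hj' j)).const_mul _)]
  refine Finset.sum_congr rfl fun j _ => ?_
  rw [integral_const_mul, moment_val hν (hj' j)]

lemma L_B {ν α : ℝ} (hν : 0 ≤ ν) (hα : -1 < α) (Q : Polynomial ℝ) :
    ∫ t in Ioi (0:ℝ), t ^ ν * Real.exp (-t) * polyThetaApply Q α t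
      = ∑ j ∈ Finset.range (Q.natDegree + 1),
          Q.coeff j * (Real.Gamma (1 + α + j) / Real.Gamma (1 + α))
            * Real.Gamma (ν + (α + j) + 1) := by
  have hpos : ∀ j : ℕ, (0:ℝ) < ν + (α + j) + 1 := fun j => by
    have : (0:ℝ) ≤ j := Nat.cast_nonneg j
    linarith
  have hstep : ∫ t in Ioi (0:ℝ), t ^ ν * Real.exp (-t) * polyThetaApply Q α t
      = ∫ t in Ioi (0:ℝ), ∑ j ∈ Finset.range (Q.natDegree + 1),
          (Q.coeff j * (Real.Gamma (1 + α + j) / Real.Gamma (1 + α)))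
            * (t ^ ((ν + (α + j) + 1) - 1) * Real.exp (-t)) := by
    refine setIntegral_congr_fun measurableSet_Ioi fun t ht => ?_
    rw [polyThetaApply, Finset.mul_sum]
    refine Finset.sum_congr rfl fun j _ => ?_
    have hexp : t ^ (ν + (α + (j:ℝ)) + 1 - 1) = t ^ ν * t ^ (α + (j:ℝ)) := by
      rw [← rpow_add ht]; norm_num
    rw [hexp]
    ring
  rw [hstep, integral_finset_sum _ (fun j _ => (gamma_integrable (hpos j)).const_mul _)]
  refine Finset.sum_congr rfl fun j _ => ?_
  rw [integral_const_mul, gamma_val (hpos j)]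

lemma AB {ν α : ℝ} (hν : 0 ≤ ν) (hα : -1 < α) (Q : Polynomial ℝ) :
    ∫ x in Ioi (0:ℝ), Q.eval x * x ^ α * rho ν x
      = Real.Gamma (1 + α)
        * ∫ t in Ioi (0:ℝ), t ^ ν * Real.exp (-t) * polyThetaApply Q α t := by
  rw [L_A hν hα Q, L_B hν hα Q, Finset.mul_sum]
  refine Finset.sum_congr rfl fun j _ => ?_
  have hΓ : Real.Gamma (1 + α) ≠ 0 := (Real.Gamma_pos_of_pos (by linarith)).ne'
  rw [show α + (j:ℝ) + 1 = 1 + α + j by ring]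
  field_simp

theorem prudnikov_orthogonality_iff_composition_orthogonality
    (ν α : ℝ) (hν : 0 ≤ ν) (hα : -1 < α) (P : ℕ → Polynomial ℝ)
    (hdeg : ∀ n, (P n).natDegree = n) :
    (∀ n m : ℕ,
        ∫ x in Ioi (0:ℝ), (P n).eval x * (P m).eval x * x ^ α * rho ν x
          = if n = m then 1 else 0)
      ↔ (∀ n m : ℕ,
        ∫ t in Ioi (0:ℝ), t ^ ν * Real.exp (-t) * polyThetaApply (P m * P n) α t
          = (if n = m then 1 else 0) / Real.Gamma (1 + α)) := by
  have hΓ : Real.Gamma (1 + α) ≠ 0 := (Real.Gamma_pos_of_pos (by linarith)).ne'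
  have key : ∀ n m : ℕ,
      ∫ x in Ioi (0:ℝ), (P n).eval x * (P m).eval x * x ^ α * rho ν x
        = Real.Gamma (1 + α)
          * ∫ t in Ioi (0:ℝ), t ^ ν * Real.exp (-t) * polyThetaApply (P m * P n) α t := by
    intro n m
    rw [← AB hν hα (P m * P n)]
    refine setIntegral_congr_fun measurableSet_Ioi fun x _ => ?_
    rw [Polynomial.eval_mul]
    ring
  constructor
  · intro H n m
    rw [eq_div_iff hΓ, mul_comm, ← key n m, H n m]
  · intro H n m
    rw [key n m, H n m, mul_div_cancel₀ _ hΓ]
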